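/- For every λ ∈ ℝ, the Lie algebras 𝔤_λ and 𝔤_{−λ} are isomorphic; explicitly, the linear map determined on bases by E₁ ↦ E₁', E₂ ↦ E₂', E₃ ↦ −E₃', E₄ ↦ −E₄' is a Lie algebra isomorphism from 𝔤_λ onto 𝔤_{−λ}. -/

import Mathlib

/-- For every `λ ∈ ℝ`, the Lie algebras `𝔤_λ` and `𝔤_{−λ}` are
isomorphic; explicitly, the linear map determined on the bases by `E₁ ↦ E₁'`,
`E₂ ↦ E₂'`, `E₃ ↦ −E₃'`, `E₄ ↦ −E₄'` is a Lie algebra isomorphism. -/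
theorem g_lambda_iso_g_neg_lambda (lam : ℝ)
    (L : Type*) [LieRing L] [LieAlgebra ℝ L] (E : Module.Basis (Fin 4) ℝ L)
    (h12 : ⁅E 0, E 1⁆ = E 1 - lam • E 2)
    (h13 : ⁅E 0, E 2⁆ = lam • E 1 + E 2)
    (h14 : ⁅E 0, E 3⁆ = (2 : ℝ) • E 3)
    (h23 : ⁅E 1, E 2⁆ = -E 3)
    (h24 : ⁅E 1, E 3⁆ = 0)
    (h34 : ⁅E 2, E 3⁆ = 0)
    (L' : Type*) [LieRing L'] [LieAlgebra ℝ L'] (E' : Module.Basis (Fin 4) ℝ L')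
    (h12' : ⁅E' 0, E' 1⁆ = E' 1 - (-lam) • E' 2)
    (h13' : ⁅E' 0, E' 2⁆ = (-lam) • E' 1 + E' 2)
    (h14' : ⁅E' 0, E' 3⁆ = (2 : ℝ) • E' 3)
    (h23' : ⁅E' 1, E' 2⁆ = -E' 3)
    (h24' : ⁅E' 1, E' 3⁆ = 0)
    (h34' : ⁅E' 2, E' 3⁆ = 0) :
    ∃ f : L ≃ₗ⁅ℝ⁆ L',
      f (E 0) = E' 0 ∧ f (E 1) = E' 1 ∧ f (E 2) = -E' 2 ∧ f (E 3) = -E' 3 := by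
  -- reversed brackets
  have h21 : ⁅E 1, E 0⁆ = -(E 1 - lam • E 2) := by rw [← lie_skew, h12]
  have h31 : ⁅E 2, E 0⁆ = -(lam • E 1 + E 2) := by rw [← lie_skew, h13]
  have h41 : ⁅E 3, E 0⁆ = -((2 : ℝ) • E 3) := by rw [← lie_skew, h14]
  have h32 : ⁅E 2, E 1⁆ = -(-E 3) := by rw [← lie_skew, h23]
  have h42 : ⁅E 3, E 1⁆ = -(0 : L) := by rw [← lie_skew, h24]
  have h43 : ⁅E 3, E 2⁆ = -(0 : L) := by rw [← lie_skew, h34]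
  have h21' : ⁅E' 1, E' 0⁆ = -(E' 1 - (-lam) • E' 2) := by rw [← lie_skew, h12']
  have h31' : ⁅E' 2, E' 0⁆ = -((-lam) • E' 1 + E' 2) := by rw [← lie_skew, h13']
  have h41' : ⁅E' 3, E' 0⁆ = -((2 : ℝ) • E' 3) := by rw [← lie_skew, h14']
  have h32' : ⁅E' 2, E' 1⁆ = -(-E' 3) := by rw [← lie_skew, h23']
  have h42' : ⁅E' 3, E' 1⁆ = -(0 : L') := by rw [← lie_skew, h24']
  have h43' : ⁅E' 3, E' 2⁆ = -(0 : L') := by rw [← lie_skew, h34']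
  set v : Fin 4 → L' := ![E' 0, E' 1, -E' 2, -E' 3] with hv
  set w : Fin 4 → L := ![E 0, E 1, -E 2, -E 3] with hw
  set f : L →ₗ[ℝ] L' := E.constr ℝ v with hfdef
  set g : L' →ₗ[ℝ] L := E'.constr ℝ w with hgdef
  have hf : ∀ i, f (E i) = v i := fun i => E.constr_basis ℝ v i
  have hg : ∀ i, g (E' i) = w i := fun i => E'.constr_basis ℝ w i
  have hfg : f.comp g = LinearMap.id := by
    apply Module.Basis.ext E'
    intro i
    fin_cases i <;>
      simp [hg, hf, hv, hw]
  have hgf : g.comp f = LinearMap.id := by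
    apply Module.Basis.ext E
    intro i
    fin_cases i <;>
      simp [hg, hf, hv, hw]
  have hlie : ∀ x y : L, f ⁅x, y⁆ = ⁅f x, f y⁆ := by
    let B1 : L →ₗ[ℝ] L →ₗ[ℝ] L' := LinearMap.mk₂ ℝ (fun x y => f ⁅x, y⁆)
      (fun x x' y => by simp [add_lie])
      (fun c x y => by simp [smul_lie])
      (fun x y y' => by simp [lie_add])
      (fun c x y => by simp [lie_smul])
    let B2 : L →ₗ[ℝ] L →ₗ[ℝ] L' := LinearMap.mk₂ ℝ (fun x y => ⁅f x, f y⁆)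
      (fun x x' y => by simp [add_lie])
      (fun c x y => by simp [smul_lie])
      (fun x y y' => by simp [lie_add])
      (fun c x y => by simp [lie_smul])
    have hB : B1 = B2 := by
      apply Module.Basis.ext E
      intro i
      apply Module.Basis.ext E
      intro j
      fin_cases i <;> fin_cases j <;>
        simp [B1, B2, hf, hv, h12, h13, h14, h23, h24, h34, h21, h31, h41, h32, h42, h43,
          h12', h13', h14', h23', h24', h34', h21', h31', h41', h32', h42', h43',
          smul_sub, smul_add, sub_eq_add_neg] <;>
        abel
    intro x y
    have h1 := LinearMap.congr_fun (LinearMap.congr_fun hB x) y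
    simpa [B1, B2] using h1
  refine ⟨{ toLinearMap := f
            map_lie' := fun {x y} => hlie x y
            invFun := g
            left_inv := fun x => by
              have := LinearMap.congr_fun hgf x
              simpa using this
            right_inv := fun x => by
              have := LinearMap.congr_fun hfg x
              simpa using this }, ?_, ?_, ?_, ?_⟩ <;>
    · show f _ = _
      simp [hf, hv]
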